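/- arXiv:1902.03648 — 3 statements merged into one kernel-verified Lean document; each statement's English description precedes it below -/
import Mathlib

section
/- Let m be a positive integer, G = P_4 ⊔ mP_2 and G' = P_4 ⊔ (m−1)P_2. Then for every first-order sentence φ in the language of graphs of quantifier depth at most m+1, G ⊨ φ if and only if G' ⊨ φ. -/
open FirstOrder

/-- Quantifier depth of a first-order (bounded) formula: atomic formulas have
depth 0, binary connectives take the max, and a quantifier adds 1. -/
def FirstOrder.Language.BoundedFormula.qdepth {L : Language} {α : Type*} :
    {n : ℕ} → L.BoundedFormula α n → ℕ
  | _, .falsum => 0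
  | _, .equal _ _ => 0
  | _, .rel _ _ => 0
  | _, .imp f g => max f.qdepth g.qdepth
  | _, .all f => f.qdepth + 1

/-- Disjoint union of `m` copies of a graph `A`. -/
def manyCopies {α : Type*} (m : ℕ) (A : SimpleGraph α) : SimpleGraph (Fin m × α) where
  Adj p q := p.1 = q.1 ∧ A.Adj p.2 q.2
  symm := ⟨by intro p q h; exact ⟨h.1.symm, h.2.symm⟩⟩
  loopless := ⟨by intro p h; exact A.loopless.irrefl _ h.2⟩

namespace EFAux

open SimpleGraph Sum

abbrev Vtx (m : ℕ) := Fin 4 ⊕ Fin m × Fin 2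

abbrev GG (m : ℕ) : SimpleGraph (Vtx m) :=
  SimpleGraph.pathGraph 4 ⊕g manyCopies m (SimpleGraph.pathGraph 2)

lemma adj_inl_inl {m : ℕ} {w w' : Fin 4} :
    (GG m).Adj (inl w) (inl w') ↔ (pathGraph 4).Adj w w' := Iff.rfl

lemma p2_adj {j j' : Fin 2} : (pathGraph 2).Adj j j' ↔ j ≠ j' := by
  rw [pathGraph_adj]
  rw [ne_eq, ← Fin.val_eq_val]
  have := j.isLt; have := j'.isLt
  omega

lemma adj_inr_inr {m : ℕ} {p q : Fin m × Fin 2} :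
    (GG m).Adj (inr p) (inr q) ↔ p.1 = q.1 ∧ p.2 ≠ q.2 :=
  (Iff.rfl : (GG m).Adj (inr p) (inr q) ↔ p.1 = q.1 ∧ (pathGraph 2).Adj p.2 q.2).trans
    (and_congr_right fun _ => p2_adj)

lemma not_adj_inl_inr {m : ℕ} {w : Fin 4} {p : Fin m × Fin 2} :
    ¬ (GG m).Adj (inl w) (inr p) := fun h => by exact Bool.noConfusion h

lemma not_adj_inr_inl {m : ℕ} {w : Fin 4} {p : Fin m × Fin 2} :
    ¬ (GG m).Adj (inr p) (inl w) := fun h => by exact Bool.noConfusion h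

def nonnbr : Fin 4 → Fin 4 := ![2, 3, 0, 1]

lemma nonnbr_ne (q : Fin 4) : nonnbr q ≠ q := by fin_cases q <;> decide

lemma nonnbr_not_adj (q : Fin 4) : ¬ (pathGraph 4).Adj (nonnbr q) q := by
  rw [pathGraph_adj]; fin_cases q <;> decide

lemma nonnbr_not_adj' (q : Fin 4) : ¬ (pathGraph 4).Adj q (nonnbr q) := by
  rw [pathGraph_adj]; fin_cases q <;> decide

def nbr : Fin 4 → Fin 4 := ![1, 0, 3, 2]

lemma nbr_ne (q : Fin 4) : nbr q ≠ q := by fin_cases q <;> decide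

lemma nbr_adj (q : Fin 4) : (pathGraph 4).Adj (nbr q) q := by
  rw [pathGraph_adj]; fin_cases q <;> decide

def other (j : Fin 2) : Fin 2 := ⟨1 - j.val, by omega⟩

lemma other_ne (j : Fin 2) : other j ≠ j := by
  apply Fin.ne_of_val_ne; have := j.isLt; simp [other]; omega

end EFAux

namespace EFAux
open SimpleGraph Sum

section
variable {M : ℕ}

/-- Unary compatibility for clean states. -/
def U (x : Vtx (M + 1)) (x' : Vtx M) : Prop :=
  (∀ w, x = inl w ↔ x' = inl w) ∧ (∀ i j, x = inr (i, j) → ∃ c, x' = inr (c, j))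

/-- Binary compatibility: the copy-pattern is preserved. -/
def B (x : Vtx (M + 1)) (x' : Vtx M) (y : Vtx (M + 1)) (y' : Vtx M) : Prop :=
  ∀ i j i' j' c d c' d', x = inr (i, j) → y = inr (i', j') →
    x' = inr (c, d) → y' = inr (c', d') → (i = i' ↔ c = c')

lemma B_self (x : Vtx (M + 1)) (x' : Vtx M) : B x x' x x' := by
  intro i j i' j' c d c' d' h1 h2 h3 h4
  rw [h1] at h2; rw [h3] at h4
  simp only [inr.injEq, Prod.mk.injEq] at h2 h4
  exact iff_of_true h2.1 h4.1

lemma B.symm {x x' y y'} (h : @B M x x' y y') : B y y' x x' := by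
  intro i j i' j' c d c' d' h1 h2 h3 h4
  have := h i' j' i j c' d' c d h2 h1 h4 h3
  tauto

/-- Unary condition for overflow states. -/
def OU (i₀ : Fin (M + 1)) (j₀ : Fin 2) (q₀ : Fin 4) (x : Vtx (M + 1)) (x' : Vtx M) : Prop :=
  (∃ i j, x = inr (i, j)) ∧ (∀ j, x = inr (i₀, j) → j = j₀ ∧ x' = inl q₀) ∧
  (∀ i j, x = inr (i, j) → i ≠ i₀ → ∃ c, x' = inr (c, j))

def Clean {n : ℕ} (v : Fin n → Vtx (M + 1)) (v' : Fin n → Vtx M) : Prop :=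
  (∀ k, U (v k) (v' k)) ∧ (∀ k l, B (v k) (v' k) (v l) (v' l))

def Overflow {n : ℕ} (v : Fin n → Vtx (M + 1)) (v' : Fin n → Vtx M) : Prop :=
  ∃ i₀ j₀ q₀, (∀ k, OU i₀ j₀ q₀ (v k) (v' k)) ∧ (∀ k l, B (v k) (v' k) (v l) (v' l))

/-- Pairwise atomic equivalence of tuples. -/
def Q (x : Vtx (M + 1)) (x' : Vtx M) (y : Vtx (M + 1)) (y' : Vtx M) : Prop :=
  (x = y ↔ x' = y') ∧ ((GG (M + 1)).Adj x y ↔ (GG M).Adj x' y')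

lemma Q.symm {x x' y y'} (h : @Q M x x' y y') : Q y y' x x' :=
  ⟨eq_comm.trans (h.1.trans eq_comm), (GG _).adj_comm _ _ |>.trans (h.2.trans ((GG _).adj_comm _ _))⟩

lemma Q_self (x : Vtx (M + 1)) (x' : Vtx M) : Q x x' x x' :=
  ⟨iff_of_true rfl rfl, iff_of_false ((GG _).loopless.irrefl x) ((GG _).loopless.irrefl x')⟩

def AtomEq {n : ℕ} (v : Fin n → Vtx (M + 1)) (v' : Fin n → Vtx M) : Prop :=
  ∀ k l, Q (v k) (v' k) (v l) (v' l)

def Good : ℕ → {n : ℕ} → (Fin n → Vtx (M + 1)) → (Fin n → Vtx M) → Prop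
  | 0, _, v, v' => AtomEq v v'
  | (r + 1), n, v, v' => n + (r + 1) ≤ M + 2 ∧ (Clean v v' ∨ (r = 0 ∧ Overflow v v'))

section snoc
variable {n : ℕ} {v : Fin n → Vtx (M + 1)} {v' : Fin n → Vtx M} {a : Vtx (M + 1)} {a' : Vtx M}

lemma snoc_pointwise {P : Vtx (M + 1) → Vtx M → Prop}
    (h : ∀ k, P (v k) (v' k)) (ha : P a a') :
    ∀ k : Fin (n + 1), P ((Fin.snoc v a : Fin (n+1) → Vtx (M+1)) k) ((Fin.snoc v' a' : Fin (n+1) → Vtx M) k) := by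
  intro k
  refine Fin.lastCases ?_ (fun k' => ?_) k
  · simpa using ha
  · simpa using h k'

lemma snoc_pairwise {R : Vtx (M + 1) → Vtx M → Vtx (M + 1) → Vtx M → Prop}
    (h : ∀ k l, R (v k) (v' k) (v l) (v' l))
    (h1 : ∀ k, R a a' (v k) (v' k))
    (h2 : ∀ k, R (v k) (v' k) a a')
    (h3 : R a a' a a') :
    ∀ k l : Fin (n + 1), R ((Fin.snoc v a : Fin (n+1) → Vtx (M+1)) k) ((Fin.snoc v' a' : Fin (n+1) → Vtx M) k)
      ((Fin.snoc v a : Fin (n+1) → Vtx (M+1)) l) ((Fin.snoc v' a' : Fin (n+1) → Vtx M) l) := by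
  intro k l
  refine Fin.lastCases ?_ (fun k' => ?_) k
  · refine Fin.lastCases ?_ (fun l' => ?_) l
    · simpa using h3
    · simpa using h1 l'
  · refine Fin.lastCases ?_ (fun l' => ?_) l
    · simpa using h2 k'
    · simpa using h k' l'

lemma Clean.snoc (h : Clean v v') (hU : U a a') (hB : ∀ k, B a a' (v k) (v' k)) :
    Clean (Fin.snoc v a) (Fin.snoc v' a') :=
  ⟨snoc_pointwise h.1 hU, snoc_pairwise h.2 hB (fun k => (hB k).symm) (B_self a a')⟩

lemma Overflow.snoc {i₀ j₀ q₀} (hOU : ∀ k, OU i₀ j₀ q₀ (v k) (v' k))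
    (hB : ∀ k l, B (v k) (v' k) (v l) (v' l))
    (ha : OU i₀ j₀ q₀ a a') (haB : ∀ k, B a a' (v k) (v' k)) :
    Overflow (Fin.snoc v a) (Fin.snoc v' a') :=
  ⟨i₀, j₀, q₀, snoc_pointwise hOU ha,
    snoc_pairwise hB haB (fun k => (haB k).symm) (B_self a a')⟩

lemma AtomEq.snoc (h : AtomEq v v') (hQ : ∀ k, Q a a' (v k) (v' k)) :
    AtomEq (Fin.snoc v a) (Fin.snoc v' a') :=
  snoc_pairwise h hQ (fun k => (hQ k).symm) (Q_self a a')

end snoc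

lemma Clean.atomEq {n : ℕ} {v : Fin n → Vtx (M + 1)} {v' : Fin n → Vtx M}
    (h : Clean v v') : AtomEq v v' := by
  obtain ⟨hU, hB⟩ := h
  intro k l
  rcases hvk : v k with w | ⟨i, j⟩ <;> rcases hvl : v l with w₂ | ⟨i', j'⟩
  · have hv'k : v' k = inl w := ((hU k).1 w).mp hvk
    have hv'l : v' l = inl w₂ := ((hU l).1 w₂).mp hvl
    rw [hv'k, hv'l]
    exact ⟨by simp, Iff.rfl⟩
  · obtain ⟨c, hv'l⟩ := (hU l).2 i' j' hvl
    have hv'k : v' k = inl w := ((hU k).1 w).mp hvk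
    rw [hv'k, hv'l]
    exact ⟨iff_of_false (by simp) (by simp),
      iff_of_false not_adj_inl_inr not_adj_inl_inr⟩
  · obtain ⟨c, hv'k⟩ := (hU k).2 i j hvk
    have hv'l : v' l = inl w₂ := ((hU l).1 w₂).mp hvl
    rw [hv'k, hv'l]
    exact ⟨iff_of_false (by simp) (by simp),
      iff_of_false not_adj_inr_inl not_adj_inr_inl⟩
  · obtain ⟨c, hv'k⟩ := (hU k).2 i j hvk
    obtain ⟨c', hv'l⟩ := (hU l).2 i' j' hvl
    have hBi : i = i' ↔ c = c' := hB k l i j i' j' c j c' j' hvk hvl hv'k hv'l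
    rw [hv'k, hv'l]
    constructor
    · simp only [inr.injEq, Prod.mk.injEq]
      exact and_congr_left fun _ => hBi
    · rw [adj_inr_inr, adj_inr_inr]
      exact and_congr_left fun _ => hBi

lemma Overflow.atomEq {n : ℕ} {v : Fin n → Vtx (M + 1)} {v' : Fin n → Vtx M}
    (h : Overflow v v') : AtomEq v v' := by
  obtain ⟨i₀, j₀, q₀, hOU, hB⟩ := h
  intro k l
  obtain ⟨i, j, hvk⟩ := (hOU k).1
  obtain ⟨i', j', hvl⟩ := (hOU l).1
  by_cases hi : i = i₀ <;> by_cases hi' : i' = i₀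
  · subst hi; subst hi'
    obtain ⟨hj, hv'k⟩ := (hOU k).2.1 j hvk
    obtain ⟨hj', hv'l⟩ := (hOU l).2.1 j' hvl
    subst hj; subst hj'
    rw [hvk, hvl, hv'k, hv'l]
    exact ⟨iff_of_true rfl rfl, iff_of_false ((GG _).loopless.irrefl _) ((GG _).loopless.irrefl _)⟩
  · subst hi
    obtain ⟨hj, hv'k⟩ := (hOU k).2.1 j hvk
    obtain ⟨c', hv'l⟩ := (hOU l).2.2 i' j' hvl hi'
    rw [hvk, hvl, hv'k, hv'l]
    refine ⟨iff_of_false ?_ (by simp), iff_of_false ?_ not_adj_inl_inr⟩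
    · simp only [inr.injEq, Prod.mk.injEq, not_and]
      intro hii; exact absurd hii.symm hi'
    · rw [adj_inr_inr]
      simp only [not_and]
      intro hii; exact absurd hii.symm hi'
  · subst hi'
    obtain ⟨hj', hv'l⟩ := (hOU l).2.1 j' hvl
    obtain ⟨c, hv'k⟩ := (hOU k).2.2 i j hvk hi
    rw [hvk, hvl, hv'k, hv'l]
    refine ⟨iff_of_false ?_ (by simp), iff_of_false ?_ not_adj_inr_inl⟩
    · simp only [inr.injEq, Prod.mk.injEq, not_and]
      intro hii; exact absurd hii hi
    · rw [adj_inr_inr]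
      simp only [not_and]
      intro hii; exact absurd hii hi
  · obtain ⟨c, hv'k⟩ := (hOU k).2.2 i j hvk hi
    obtain ⟨c', hv'l⟩ := (hOU l).2.2 i' j' hvl hi'
    have hBi : i = i' ↔ c = c' := hB k l i j i' j' c j c' j' hvk hvl hv'k hv'l
    rw [hvk, hvl, hv'k, hv'l]
    constructor
    · simp only [inr.injEq, Prod.mk.injEq]
      exact and_congr_left fun _ => hBi
    · rw [adj_inr_inr, adj_inr_inr]
      exact and_congr_left fun _ => hBi

lemma good_atomEq {r n : ℕ} {v : Fin n → Vtx (M + 1)} {v' : Fin n → Vtx M}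
    (h : Good r v v') : AtomEq v v' := by
  cases r with
  | zero => exact h
  | succ r =>
    rcases h.2 with hC | ⟨_, hO⟩
    · exact hC.atomEq
    · exact hO.atomEq

lemma Clean.good {n : ℕ} (r : ℕ) {v : Fin n → Vtx (M + 1)} {v' : Fin n → Vtx M}
    (h : Clean v v') (hn : n + r ≤ M + 2) : Good r v v' := by
  cases r with
  | zero => exact h.atomEq
  | succ r => exact ⟨hn, Or.inl h⟩

end
end EFAux

namespace EFAux
open SimpleGraph Sum
section
variable {M : ℕ}

lemma good_zero {n : ℕ} {v : Fin n → Vtx (M+1)} {v' : Fin n → Vtx M} :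
    Good 0 v v' ↔ AtomEq v v' := Iff.rfl

lemma good_succ {r n : ℕ} {v : Fin n → Vtx (M+1)} {v' : Fin n → Vtx M} :
    Good (r+1) v v' ↔ ((n + (r+1) ≤ M + 2) ∧ (Clean v v' ∨ (r = 0 ∧ Overflow v v'))) := Iff.rfl

lemma U_inl {w : Fin 4} : U (M := M) (inl w) (inl w) :=
  ⟨fun w₂ => by simp, fun i j h => absurd h (by simp)⟩

lemma U_inr {i : Fin (M+1)} {c : Fin M} {j : Fin 2} : U (inr (i, j)) (inr (c, j)) :=
  ⟨fun w => by simp, fun i₂ j₂ h => by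
    simp only [inr.injEq, Prod.mk.injEq] at h
    exact ⟨c, by rw [← h.2]⟩⟩

lemma full_count {n : ℕ} {v' : Fin n → Vtx M}
    (hfull : ∀ c : Fin M, ∃ k j₂, v' k = inr (c, j₂)) :
    ∃ f : Fin M → Fin n, Function.Injective f ∧ ∀ c, ∃ j₂, v' (f c) = inr (c, j₂) := by
  choose f j hf using hfull
  refine ⟨f, ?_, fun c => ⟨j c, hf c⟩⟩
  intro c c' he
  have h1 := hf c
  rw [he] at h1
  have h3 : (inr (c, j c) : Vtx M) = inr (c', j c') := h1.symm.trans (hf c')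
  simp only [inr.injEq, Prod.mk.injEq] at h3
  exact h3.1

lemma full_ge {n : ℕ} {v' : Fin n → Vtx M}
    (hfull : ∀ c : Fin M, ∃ k j₂, v' k = inr (c, j₂)) : M ≤ n := by
  obtain ⟨f, hfinj, -⟩ := full_count hfull
  simpa using Fintype.card_le_of_injective f hfinj

lemma clean_not_all_touched {n : ℕ} {v : Fin n → Vtx (M+1)} {v' : Fin n → Vtx M}
    (h : Clean v v') (hall : ∀ i : Fin (M+1), ∃ k j₂, v k = inr (i, j₂)) : False := by
  choose f j hf using hall
  have hg : ∀ i, ∃ c, v' (f i) = inr (c, j i) := fun i => (h.1 (f i)).2 i (j i) (hf i)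
  choose g hgspec using hg
  have hginj : Function.Injective g := by
    intro i i' he
    exact (h.2 (f i) (f i') i (j i) i' (j i') (g i) (j i) (g i') (j i')
      (hf i) (hf i') (hgspec i) (hgspec i')).mpr he
  have := Fintype.card_le_of_injective g hginj
  simp at this

lemma full_inl_unique {n : ℕ} {v' : Fin n → Vtx M} (hn : n ≤ M + 1)
    (hfull : ∀ c : Fin M, ∃ k j₂, v' k = inr (c, j₂)) :
    ∀ k l w w₂, v' k = inl w → v' l = inl w₂ → w = w₂ := by
  obtain ⟨f, hfinj, hf⟩ := full_count hfull
  intro k l w w₂ hk hl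
  by_cases hkl : k = l
  · subst hkl
    rw [hk] at hl
    exact inl_injective hl
  · exfalso
    have hmem : ∀ x ∈ Finset.univ.image f, ∀ u : Fin 4, v' x ≠ inl u := by
      intro x hx u
      simp only [Finset.mem_image] at hx
      obtain ⟨c, -, rfl⟩ := hx
      obtain ⟨j₂, hj⟩ := hf c
      rw [hj]
      simp
    have h1 : l ∉ Finset.univ.image f := fun hmem' => hmem l hmem' w₂ hl
    have h2 : k ∉ insert l (Finset.univ.image f) := by
      simp only [Finset.mem_insert]
      push_neg
      exact ⟨hkl, fun hmem' => hmem k hmem' w hk⟩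
    have hcard : (insert k (insert l (Finset.univ.image f))).card = M + 2 := by
      rw [Finset.card_insert_of_notMem h2, Finset.card_insert_of_notMem h1,
        Finset.card_image_of_injective _ hfinj, Finset.card_univ]
      simp
    have hle := Finset.card_le_univ (insert k (insert l (Finset.univ.image f)))
    rw [hcard] at hle
    simp at hle
    omega

lemma fresh_p4 {n : ℕ} {v' : Fin n → Vtx M}
    (huniq : ∀ k l w w₂, v' k = inl w → v' l = inl w₂ → w = w₂) :
    ∃ q : Fin 4, ∀ k w, v' k = inl w →
      q ≠ w ∧ ¬ (pathGraph 4).Adj q w ∧ ¬ (pathGraph 4).Adj w q := by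
  by_cases hex : ∃ k w, v' k = inl w
  · obtain ⟨k₁, w₁, h₁⟩ := hex
    refine ⟨nonnbr w₁, fun k w hk => ?_⟩
    have hw : w = w₁ := huniq k k₁ w w₁ hk h₁
    subst hw
    exact ⟨nonnbr_ne w, nonnbr_not_adj w, nonnbr_not_adj' w⟩
  · exact ⟨0, fun k w hk => absurd ⟨k, w, hk⟩ hex⟩

lemma full_all_inr {n : ℕ} {v' : Fin n → Vtx M} (hn : n ≤ M)
    (hfull : ∀ c : Fin M, ∃ k j₂, v' k = inr (c, j₂)) :
    ∀ k, ∃ c j₂, v' k = inr (c, j₂) := by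
  obtain ⟨f, hfinj, hf⟩ := full_count hfull
  have hM : M ≤ n := by simpa using Fintype.card_le_of_injective f hfinj
  have hcard : Fintype.card (Fin M) = Fintype.card (Fin n) := by simp; omega
  have hbij : Function.Bijective f := (Fintype.bijective_iff_injective_and_card f).2 ⟨hfinj, hcard⟩
  intro k
  obtain ⟨c, hc⟩ := hbij.2 k
  obtain ⟨j₂, hj⟩ := hf c
  exact ⟨c, j₂, by rw [← hc]; exact hj⟩

lemma Clean.lookup {n : ℕ} {v : Fin n → Vtx (M+1)} {v' : Fin n → Vtx M}
    (hC : Clean v v') {k₀ : Fin n} {c : Fin M} {j₂ : Fin 2}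
    (hk₀ : v' k₀ = inr (c, j₂)) : ∃ i, v k₀ = inr (i, j₂) := by
  rcases hvk : v k₀ with w | ⟨i', j₂'⟩
  · have h2 := ((hC.1 k₀).1 w).mp hvk
    rw [hk₀] at h2
    exact absurd h2 (by simp)
  · obtain ⟨c₂, hc₂⟩ := (hC.1 k₀).2 i' j₂' hvk
    rw [hk₀] at hc₂
    simp only [inr.injEq, Prod.mk.injEq] at hc₂
    exact ⟨i', by rw [← hc₂.2]⟩

end
end EFAux

namespace EFAux
open SimpleGraph Sum
section
variable {M : ℕ}

lemma step_forth {r n : ℕ} {v : Fin n → Vtx (M + 1)} {v' : Fin n → Vtx M}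
    (h : Good (r + 1) v v') (a : Vtx (M + 1)) :
    ∃ a' : Vtx M, Good r (Fin.snoc v a) (Fin.snoc v' a') := by
  rw [good_succ] at h
  obtain ⟨harith, hCO⟩ := h
  rcases hCO with hC | ⟨hr0, hO⟩
  · -- Clean state
    rcases a with w | ⟨i, j⟩
    · refine ⟨inl w, Clean.good r (hC.snoc U_inl ?_) (by omega)⟩
      intro k i₂ j₂ i' j' c d c' d' h1
      exact absurd h1 (by simp)
    · by_cases ht : ∃ k j₂, v k = inr (i, j₂)
      · obtain ⟨k₀, j₂, hk₀⟩ := ht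
        obtain ⟨c, hc⟩ := (hC.1 k₀).2 i j₂ hk₀
        refine ⟨inr (c, j), Clean.good r (hC.snoc U_inr ?_) (by omega)⟩
        intro k i₂ j₃ i' j' c₂ d c' d' h1 h2 h3 h4
        simp only [inr.injEq, Prod.mk.injEq] at h1 h3
        rw [← h1.1, ← h3.1]
        exact hC.2 k₀ k i j₂ i' j' c j₂ c' d' hk₀ h2 hc h4
      · by_cases hfresh : ∃ c : Fin M, ∀ k j₂, v' k ≠ inr (c, j₂)
        · obtain ⟨c, hcf⟩ := hfresh
          refine ⟨inr (c, j), Clean.good r (hC.snoc U_inr ?_) (by omega)⟩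
          intro k i₂ j₃ i' j' c₂ d c' d' h1 h2 h3 h4
          simp only [inr.injEq, Prod.mk.injEq] at h1 h3
          rw [← h1.1, ← h3.1]
          refine iff_of_false (fun hii => ht ⟨k, j', by rw [hii]; exact h2⟩)
            (fun hcc => hcf k d' (by rw [hcc]; exact h4))
        · push_neg at hfresh
          have hM : M ≤ n := full_ge hfresh
          have hr1 : r ≤ 1 := by omega
          interval_cases r
          · -- r = 0 : answer with a fresh P4 vertex
            have huniq := full_inl_unique (show n ≤ M + 1 by omega) hfresh
            obtain ⟨q, hq⟩ := fresh_p4 huniq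
            refine ⟨inl q, (good_zero).mpr (hC.atomEq.snoc ?_)⟩
            intro k
            rcases hvk : v k with w | ⟨i', j'⟩
            · have hv'k : v' k = inl w := ((hC.1 k).1 w).mp hvk
              obtain ⟨hq1, hq2, hq3⟩ := hq k w hv'k
              rw [hv'k]
              exact ⟨iff_of_false (by simp) (by simp [hq1]),
                iff_of_false not_adj_inr_inl hq2⟩
            · obtain ⟨c', hv'k⟩ := (hC.1 k).2 i' j' hvk
              rw [hv'k]
              refine ⟨iff_of_false (fun he => ?_) (by simp),
                iff_of_false (fun he => ?_) not_adj_inl_inr⟩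
              · simp only [inr.injEq, Prod.mk.injEq] at he
                exact ht ⟨k, j', by rw [he.1]; exact hvk⟩
              · rw [adj_inr_inr] at he
                exact ht ⟨k, j', by rw [show i = i' from he.1]; exact hvk⟩
          · -- r = 1 : go to an overflow state
            have hn' : n ≤ M := by omega
            have hall' := full_all_inr hn' hfresh
            have hallv : ∀ k, ∃ i' j', v k = inr (i', j') := by
              intro k
              rcases hvk : v k with w | ⟨i', j'⟩
              · have hv'k : v' k = inl w := ((hC.1 k).1 w).mp hvk
                obtain ⟨c, j₂, h'⟩ := hall' k
                rw [h'] at hv'k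
                exact absurd hv'k (by simp)
              · exact ⟨i', j', rfl⟩
            refine ⟨inl 0, (good_succ).mpr ⟨by omega, Or.inr ⟨rfl,
              Overflow.snoc (i₀ := i) (j₀ := j) (q₀ := 0) ?_ hC.2 ?_ ?_⟩⟩⟩
            · intro k
              obtain ⟨i', j', hvk⟩ := hallv k
              obtain ⟨c', hv'k⟩ := (hC.1 k).2 i' j' hvk
              refine ⟨⟨i', j', hvk⟩, ?_, ?_⟩
              · intro j₄ h4
                rw [hvk] at h4
                simp only [inr.injEq, Prod.mk.injEq] at h4
                exact absurd h4.1 (fun hii => ht ⟨k, j', by rw [hii] at hvk; exact hvk⟩)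
              · intro i₄ j₄ h4 hne
                rw [hvk] at h4
                simp only [inr.injEq, Prod.mk.injEq] at h4
                exact ⟨c', by rw [h4.2] at hv'k; exact hv'k⟩
            · refine ⟨⟨i, j, rfl⟩, fun j₄ h4 => ?_, fun i₄ j₄ h4 hne => ?_⟩
              · simp only [inr.injEq, Prod.mk.injEq] at h4
                exact ⟨h4.2.symm, rfl⟩
              · simp only [inr.injEq, Prod.mk.injEq] at h4
                exact absurd h4.1.symm hne
            · intro k i₂ j₂ i' j' c d c' d' h1 h2 h3 h4
              exact absurd h3 (by simp)
  · -- Overflow state (necessarily r = 0)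
    subst hr0
    obtain ⟨i₀, j₀, q₀, hOU, hB⟩ := hO
    have hatom : AtomEq v v' := Overflow.atomEq ⟨i₀, j₀, q₀, hOU, hB⟩
    rcases a with w | ⟨i, j⟩
    · refine ⟨inl (nonnbr q₀), (good_zero).mpr (hatom.snoc ?_)⟩
      intro k
      obtain ⟨i', j', hvk⟩ := (hOU k).1
      by_cases hi' : i' = i₀
      · subst hi'
        obtain ⟨hj, hv'k⟩ := (hOU k).2.1 j' hvk
        rw [hvk, hv'k]
        exact ⟨iff_of_false (by simp) (by simp [nonnbr_ne q₀]),
          iff_of_false not_adj_inl_inr (nonnbr_not_adj q₀)⟩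
      · obtain ⟨c', hv'k⟩ := (hOU k).2.2 i' j' hvk hi'
        rw [hvk, hv'k]
        exact ⟨iff_of_false (by simp) (by simp), iff_of_false not_adj_inl_inr not_adj_inl_inr⟩
    · by_cases hi : i = i₀
      · subst hi
        by_cases hj : j = j₀
        · subst hj
          refine ⟨inl q₀, (good_zero).mpr (hatom.snoc ?_)⟩
          intro k
          obtain ⟨i', j', hvk⟩ := (hOU k).1
          by_cases hi' : i' = i
          · subst hi'
            obtain ⟨hj', hv'k⟩ := (hOU k).2.1 j' hvk
            subst hj'
            rw [hvk, hv'k]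
            exact ⟨iff_of_true rfl rfl, iff_of_false ((GG _).loopless.irrefl _) ((GG _).loopless.irrefl _)⟩
          · obtain ⟨c', hv'k⟩ := (hOU k).2.2 i' j' hvk hi'
            rw [hvk, hv'k]
            exact ⟨iff_of_false (fun he => by
                simp only [inr.injEq, Prod.mk.injEq] at he; exact hi' he.1.symm) (by simp),
              iff_of_false (fun he => by
                rw [adj_inr_inr] at he; exact hi' he.1.symm) not_adj_inl_inr⟩
        · refine ⟨inl (nbr q₀), (good_zero).mpr (hatom.snoc ?_)⟩
          intro k
          obtain ⟨i', j', hvk⟩ := (hOU k).1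
          by_cases hi' : i' = i
          · subst hi'
            obtain ⟨hj', hv'k⟩ := (hOU k).2.1 j' hvk
            subst hj'
            rw [hvk, hv'k]
            exact ⟨iff_of_false (by simp [hj]) (by simp [nbr_ne q₀]),
              iff_of_true (adj_inr_inr.mpr ⟨rfl, hj⟩) (nbr_adj q₀)⟩
          · obtain ⟨c', hv'k⟩ := (hOU k).2.2 i' j' hvk hi'
            rw [hvk, hv'k]
            exact ⟨iff_of_false (fun he => by
                simp only [inr.injEq, Prod.mk.injEq] at he; exact hi' he.1.symm) (by simp),
              iff_of_false (fun he => by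
                rw [adj_inr_inr] at he; exact hi' he.1.symm) not_adj_inl_inr⟩
      · by_cases ht : ∃ k j₂, v k = inr (i, j₂)
        · obtain ⟨k₀, j₂, hk₀⟩ := ht
          obtain ⟨c, hc⟩ := (hOU k₀).2.2 i j₂ hk₀ hi
          refine ⟨inr (c, j), (good_zero).mpr (hatom.snoc ?_)⟩
          intro k
          obtain ⟨i', j', hvk⟩ := (hOU k).1
          by_cases hi' : i' = i₀
          · subst hi'
            obtain ⟨hj', hv'k⟩ := (hOU k).2.1 j' hvk
            rw [hvk, hv'k]
            exact ⟨iff_of_false (fun he => by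
                simp only [inr.injEq, Prod.mk.injEq] at he; exact hi he.1) (by simp),
              iff_of_false (fun he => by
                rw [adj_inr_inr] at he; exact hi he.1) not_adj_inr_inl⟩
          · obtain ⟨c', hv'k⟩ := (hOU k).2.2 i' j' hvk hi'
            have hBi : i = i' ↔ c = c' := hB k₀ k i j₂ i' j' c j₂ c' j' hk₀ hvk hc hv'k
            rw [hvk, hv'k]
            constructor
            · simp only [inr.injEq, Prod.mk.injEq]
              exact and_congr_left fun _ => hBi
            · rw [adj_inr_inr, adj_inr_inr]
              exact and_congr_left fun _ => hBi
        · refine ⟨inl (nonnbr q₀), (good_zero).mpr (hatom.snoc ?_)⟩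
          intro k
          obtain ⟨i', j', hvk⟩ := (hOU k).1
          by_cases hi' : i' = i₀
          · subst hi'
            obtain ⟨hj', hv'k⟩ := (hOU k).2.1 j' hvk
            rw [hvk, hv'k]
            exact ⟨iff_of_false (fun he => by
                simp only [inr.injEq, Prod.mk.injEq] at he; exact hi he.1) (by simp [nonnbr_ne q₀]),
              iff_of_false (fun he => by
                rw [adj_inr_inr] at he; exact hi he.1) (nonnbr_not_adj q₀)⟩
          · obtain ⟨c', hv'k⟩ := (hOU k).2.2 i' j' hvk hi'
            rw [hvk, hv'k]
            exact ⟨iff_of_false (fun he => by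
                simp only [inr.injEq, Prod.mk.injEq] at he
                exact ht ⟨k, j', by rw [he.1]; exact hvk⟩) (by simp),
              iff_of_false (fun he => by
                rw [adj_inr_inr] at he
                exact ht ⟨k, j', by rw [show i = i' from he.1]; exact hvk⟩) not_adj_inl_inr⟩

lemma step_back {r n : ℕ} {v : Fin n → Vtx (M + 1)} {v' : Fin n → Vtx M}
    (h : Good (r + 1) v v') (a' : Vtx M) :
    ∃ a : Vtx (M + 1), Good r (Fin.snoc v a) (Fin.snoc v' a') := by
  rw [good_succ] at h
  obtain ⟨harith, hCO⟩ := h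
  rcases hCO with hC | ⟨hr0, hO⟩
  · rcases a' with w | ⟨c, j⟩
    · refine ⟨inl w, Clean.good r (hC.snoc U_inl ?_) (by omega)⟩
      intro k i₂ j₂ i' j' c d c' d' h1
      exact absurd h1 (by simp)
    · by_cases ht : ∃ k j₂, v' k = inr (c, j₂)
      · obtain ⟨k₀, j₂, hk₀⟩ := ht
        obtain ⟨i, hvk₀⟩ := hC.lookup hk₀
        refine ⟨inr (i, j), Clean.good r (hC.snoc U_inr ?_) (by omega)⟩
        intro k i₂ j₃ i' j' c₂ d c' d' h1 h2 h3 h4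
        simp only [inr.injEq, Prod.mk.injEq] at h1 h3
        rw [← h1.1, ← h3.1]
        exact hC.2 k₀ k i j₂ i' j' c j₂ c' d' hvk₀ h2 hk₀ h4
      · have hfreshi : ∃ i : Fin (M+1), ∀ k j₂, v k ≠ inr (i, j₂) := by
          by_contra hcon
          push_neg at hcon
          exact clean_not_all_touched hC hcon
        obtain ⟨i, hif⟩ := hfreshi
        refine ⟨inr (i, j), Clean.good r (hC.snoc U_inr ?_) (by omega)⟩
        intro k i₂ j₃ i' j' c₂ d c' d' h1 h2 h3 h4
        simp only [inr.injEq, Prod.mk.injEq] at h1 h3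
        rw [← h1.1, ← h3.1]
        exact iff_of_false (fun hii => hif k j' (by rw [hii]; exact h2))
          (fun hcc => ht ⟨k, d', by rw [hcc]; exact h4⟩)
  · subst hr0
    obtain ⟨i₀, j₀, q₀, hOU, hB⟩ := hO
    have hatom : AtomEq v v' := Overflow.atomEq ⟨i₀, j₀, q₀, hOU, hB⟩
    rcases a' with w | ⟨c, j⟩
    · by_cases h1 : w = q₀
      · subst h1
        refine ⟨inr (i₀, j₀), (good_zero).mpr (hatom.snoc ?_)⟩
        intro k
        obtain ⟨i', j', hvk⟩ := (hOU k).1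
        by_cases hi' : i' = i₀
        · subst hi'
          obtain ⟨hj', hv'k⟩ := (hOU k).2.1 j' hvk
          subst hj'
          rw [hvk, hv'k]
          exact ⟨iff_of_true rfl rfl, iff_of_false ((GG _).loopless.irrefl _) ((GG _).loopless.irrefl _)⟩
        · obtain ⟨c', hv'k⟩ := (hOU k).2.2 i' j' hvk hi'
          rw [hvk, hv'k]
          exact ⟨iff_of_false (fun he => by
              simp only [inr.injEq, Prod.mk.injEq] at he; exact hi' he.1.symm) (by simp),
            iff_of_false (fun he => by
              rw [adj_inr_inr] at he; exact hi' he.1.symm) not_adj_inl_inr⟩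
      · by_cases h2 : (pathGraph 4).Adj q₀ w
        · refine ⟨inr (i₀, other j₀), (good_zero).mpr (hatom.snoc ?_)⟩
          intro k
          obtain ⟨i', j', hvk⟩ := (hOU k).1
          by_cases hi' : i' = i₀
          · rw [hi'] at hvk
            obtain ⟨hj', hv'k⟩ := (hOU k).2.1 j' hvk
            rw [hj'] at hvk
            rw [hvk, hv'k]
            refine ⟨iff_of_false ?_ ?_, iff_of_true ?_ ?_⟩
            · simp [other_ne j₀]
            · simp [h1]
            · exact adj_inr_inr.mpr ⟨rfl, other_ne j₀⟩
            · exact (adj_inl_inl (m := M)).mpr h2.symm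
          · obtain ⟨c', hv'k⟩ := (hOU k).2.2 i' j' hvk hi'
            rw [hvk, hv'k]
            exact ⟨iff_of_false (fun he => by
                simp only [inr.injEq, Prod.mk.injEq] at he; exact hi' he.1.symm) (by simp),
              iff_of_false (fun he => by
                rw [adj_inr_inr] at he; exact hi' he.1.symm) not_adj_inl_inr⟩
        · refine ⟨inl 0, (good_zero).mpr (hatom.snoc ?_)⟩
          intro k
          obtain ⟨i', j', hvk⟩ := (hOU k).1
          by_cases hi' : i' = i₀
          · subst hi'
            obtain ⟨hj', hv'k⟩ := (hOU k).2.1 j' hvk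
            rw [hvk, hv'k]
            exact ⟨iff_of_false (by simp) (by simp [h1]),
              iff_of_false not_adj_inl_inr (fun ha => h2 ((adj_inl_inl (m := M)).mp ha).symm)⟩
          · obtain ⟨c', hv'k⟩ := (hOU k).2.2 i' j' hvk hi'
            rw [hvk, hv'k]
            exact ⟨iff_of_false (by simp) (by simp), iff_of_false not_adj_inl_inr not_adj_inl_inr⟩
    · by_cases ht : ∃ k j₂, v' k = inr (c, j₂)
      · obtain ⟨k₀, j₂, hk₀⟩ := ht
        obtain ⟨i, hi, hvk₀⟩ : ∃ i, i ≠ i₀ ∧ v k₀ = inr (i, j₂) := by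
          obtain ⟨i', j₂', hvk⟩ := (hOU k₀).1
          by_cases hi' : i' = i₀
          · subst hi'
            obtain ⟨hj', hv'k⟩ := (hOU k₀).2.1 j₂' hvk
            rw [hk₀] at hv'k
            exact absurd hv'k (by simp)
          · obtain ⟨c₂, hc₂⟩ := (hOU k₀).2.2 i' j₂' hvk hi'
            rw [hk₀] at hc₂
            simp only [inr.injEq, Prod.mk.injEq] at hc₂
            exact ⟨i', hi', by rw [hc₂.2]; exact hvk⟩
        refine ⟨inr (i, j), (good_zero).mpr (hatom.snoc ?_)⟩
        intro k
        obtain ⟨i', j', hvk⟩ := (hOU k).1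
        by_cases hi' : i' = i₀
        · subst hi'
          obtain ⟨hj', hv'k⟩ := (hOU k).2.1 j' hvk
          rw [hvk, hv'k]
          exact ⟨iff_of_false (fun he => by
              simp only [inr.injEq, Prod.mk.injEq] at he; exact hi he.1) (by simp),
            iff_of_false (fun he => by
              rw [adj_inr_inr] at he; exact hi he.1) not_adj_inr_inl⟩
        · obtain ⟨c', hv'k⟩ := (hOU k).2.2 i' j' hvk hi'
          have hBi : i = i' ↔ c = c' := hB k₀ k i j₂ i' j' c j₂ c' j' hvk₀ hvk hk₀ hv'k
          rw [hvk, hv'k]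
          constructor
          · simp only [inr.injEq, Prod.mk.injEq]
            exact and_congr_left fun _ => hBi
          · rw [adj_inr_inr, adj_inr_inr]
            exact and_congr_left fun _ => hBi
      · refine ⟨inl 0, (good_zero).mpr (hatom.snoc ?_)⟩
        intro k
        obtain ⟨i', j', hvk⟩ := (hOU k).1
        by_cases hi' : i' = i₀
        · subst hi'
          obtain ⟨hj', hv'k⟩ := (hOU k).2.1 j' hvk
          rw [hvk, hv'k]
          exact ⟨iff_of_false (by simp) (by simp), iff_of_false not_adj_inl_inr not_adj_inr_inl⟩
        · obtain ⟨c', hv'k⟩ := (hOU k).2.2 i' j' hvk hi'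
          rw [hvk, hv'k]
          exact ⟨iff_of_false (by simp) (fun he => by
              simp only [inr.injEq, Prod.mk.injEq] at he
              exact ht ⟨k, j', by rw [he.1]; exact hv'k⟩),
            iff_of_false not_adj_inl_inr (fun he => by
              rw [adj_inr_inr] at he
              exact ht ⟨k, j', by rw [show c = c' from he.1]; exact hv'k⟩)⟩

end
end EFAux

namespace EFAux
open SimpleGraph Sum FirstOrder

instance graphStruct (m : ℕ) : Language.graph.Structure (Vtx m) := (GG m).structure

lemma term_eq {n : ℕ} (t : Language.graph.Term (Empty ⊕ Fin n)) :
    ∃ k, t = Language.Term.var (Sum.inr k) := by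
  cases t with
  | var x =>
    cases x with
    | inl e => exact e.elim
    | inr k => exact ⟨k, rfl⟩
  | func f ts => exact isEmptyElim f

lemma realize_iff {M : ℕ} {n : ℕ} (φ : Language.graph.BoundedFormula Empty n) :
    ∀ (r : ℕ), φ.qdepth ≤ r → ∀ (e : Empty → Vtx (M+1)) (e' : Empty → Vtx M)
      (v : Fin n → Vtx (M+1)) (v' : Fin n → Vtx M), Good r v v' →
      (φ.Realize e v ↔ φ.Realize e' v') := by
  induction φ with
  | falsum =>
    intro r hr e e' v v' hg
    exact Iff.rfl
  | equal t₁ t₂ =>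
    intro r hr e e' v v' hg
    obtain ⟨k₁, rfl⟩ := term_eq t₁
    obtain ⟨k₂, rfl⟩ := term_eq t₂
    have h := good_atomEq hg
    exact (h k₁ k₂).1
  | rel R ts =>
    intro r hr e e' v v' hg
    cases R
    obtain ⟨k₁, h₁⟩ := term_eq (ts 0)
    obtain ⟨k₂, h₂⟩ := term_eq (ts 1)
    have h := good_atomEq hg
    show (GG (M+1)).Adj (Language.Term.realize (Sum.elim e v) (ts 0))
        (Language.Term.realize (Sum.elim e v) (ts 1)) ↔
      (GG M).Adj (Language.Term.realize (Sum.elim e' v') (ts 0))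
        (Language.Term.realize (Sum.elim e' v') (ts 1))
    rw [h₁, h₂]
    simp only [Language.Term.realize_var, Sum.elim_inr]
    exact (h k₁ k₂).2
  | imp f g ihf ihg =>
    intro r hr e e' v v' hg
    simp only [Language.BoundedFormula.qdepth] at hr
    rw [Language.BoundedFormula.realize_imp, Language.BoundedFormula.realize_imp]
    exact imp_congr (ihf r (le_trans (le_max_left _ _) hr) e e' v v' hg)
      (ihg r (le_trans (le_max_right _ _) hr) e e' v v' hg)
  | all f ih =>
    intro r hr e e' v v' hg
    simp only [Language.BoundedFormula.qdepth] at hr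
    cases r with
    | zero => omega
    | succ r =>
      have hf : f.qdepth ≤ r := by omega
      rw [Language.BoundedFormula.realize_all, Language.BoundedFormula.realize_all]
      constructor
      · intro hreal a'
        obtain ⟨a, hg'⟩ := step_back hg a'
        exact (ih r hf e e' _ _ hg').mp (hreal a)
      · intro hreal a
        obtain ⟨a', hg'⟩ := step_forth hg a
        exact (ih r hf e e' _ _ hg').mpr (hreal a')

lemma good_init {M r : ℕ} (h : r ≤ M + 2) (v : Fin 0 → Vtx (M+1)) (v' : Fin 0 → Vtx M) :
    Good r v v' := by
  cases r with
  | zero => exact fun k => k.elim0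
  | succ r => exact ⟨by omega, Or.inl ⟨fun k => k.elim0, fun k l => k.elim0⟩⟩

end EFAux

open FirstOrder in
/-- the graphs `G = P₄ ⊔ mP₂` and `G' = P₄ ⊔ (m−1)P₂` satisfy exactly the
same first-order sentences of quantifier depth at most `m + 1`. -/
theorem path_union_matchings_elementary_equiv (m : ℕ) (hm : 0 < m)
    (φ : Language.graph.Sentence) (hφ : φ.qdepth ≤ m + 1) :
    (letI := (SimpleGraph.pathGraph 4 ⊕g manyCopies m (SimpleGraph.pathGraph 2)).structure
     φ.Realize (Fin 4 ⊕ Fin m × Fin 2)) ↔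
    (letI := (SimpleGraph.pathGraph 4 ⊕g manyCopies (m - 1) (SimpleGraph.pathGraph 2)).structure
     φ.Realize (Fin 4 ⊕ Fin (m - 1) × Fin 2)) := by
  obtain ⟨M, rfl⟩ : ∃ M, m = M + 1 := ⟨m - 1, by omega⟩
  exact EFAux.realize_iff φ (M + 1 + 1) hφ _ _ _ _ (EFAux.good_init (by omega) _ _)
end

section
/- Let ℓ ≥ 2, m ≥ 1, k ≥ 1 be integers. Then for every first-order sentence φ in the language of graphs of quantifier depth at most ℓ−1, the almost multipartite graph G^m_{ℓ,k} satisfies φ if and only if the almost multipartite graph G^m_{ℓ−1,k} satisfies φ. -/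
open FirstOrder

/-- The almost multipartite graph `G^m_{ℓ,k}`, on triples `(i, j, h)` where `i` is the
class, `j` the dole and `h` the part: two vertices are adjacent iff they are in the same
part with different classes and doles, or have the same class and different parts. -/
def almostMultipartite (ℓ k m : ℕ) : SimpleGraph (Fin ℓ × Fin k × Fin m) where
  Adj p q := (p.2.2 = q.2.2 ∧ p.1 ≠ q.1 ∧ p.2.1 ≠ q.2.1) ∨ (p.1 = q.1 ∧ p.2.2 ≠ q.2.2)
  symm := by
    constructor
    rintro p q (⟨h1, h2, h3⟩ | ⟨h1, h2⟩)
    · exact Or.inl ⟨h1.symm, h2.symm, h3.symm⟩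
    · exact Or.inr ⟨h1.symm, h2.symm⟩
  loopless := by constructor; rintro p (⟨_, h, _⟩ | ⟨_, h⟩) <;> exact h rfl

section EFAux

open FirstOrder Language

/-- Every term in the (relational) language of graphs is a variable. -/
lemma graph_term_eq {α : Type*} (t : Language.graph.Term α) :
    ∃ i, t = Language.Term.var i := by
  cases t with
  | var i => exact ⟨i, rfl⟩
  | func f ts => exact Empty.elim f

/-- Ehrenfeucht–Fraïssé transfer: a graded family of partial isomorphisms with
back-and-forth properties transfers realization of formulas of bounded quantifier depth. -/
lemma ef_transfer {M N : Type*} (G : SimpleGraph M) (H : SimpleGraph N)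
    (P : ℕ → ∀ {n : ℕ}, (Fin n → M) → (Fin n → N) → Prop)
    (hEq : ∀ (d : ℕ) {n : ℕ} (x : Fin n → M) (y : Fin n → N), P d x y →
      ∀ s t, (x s = x t ↔ y s = y t))
    (hAdj : ∀ (d : ℕ) {n : ℕ} (x : Fin n → M) (y : Fin n → N), P d x y →
      ∀ s t, (G.Adj (x s) (x t) ↔ H.Adj (y s) (y t)))
    (hForth : ∀ (d : ℕ) {n : ℕ} (x : Fin n → M) (y : Fin n → N), P (d+1) x y →
      ∀ a, ∃ b, P d (Fin.snoc x a) (Fin.snoc y b))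
    (hBack : ∀ (d : ℕ) {n : ℕ} (x : Fin n → M) (y : Fin n → N), P (d+1) x y →
      ∀ b, ∃ a, P d (Fin.snoc x a) (Fin.snoc y b)) :
    ∀ {n : ℕ} (φ : Language.graph.BoundedFormula Empty n) (d : ℕ), φ.qdepth ≤ d →
      ∀ (x : Fin n → M) (y : Fin n → N), P d x y →
      ∀ (v : Empty → M) (w : Empty → N),
      ((letI := G.structure; φ.Realize v x) ↔ (letI := H.structure; φ.Realize w y)) := by
  intro n φ
  induction φ with
  | falsum =>
    intro d hd x y hP v w
    exact Iff.rfl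
  | equal t₁ t₂ =>
    intro d hd x y hP v w
    obtain ⟨i₁, rfl⟩ := graph_term_eq t₁
    obtain ⟨i₂, rfl⟩ := graph_term_eq t₂
    cases i₁ with
    | inl e => exact e.elim
    | inr s =>
      cases i₂ with
      | inl e => exact e.elim
      | inr t =>
        letI := G.structure; letI := H.structure
        show Term.realize (Sum.elim v x) (Term.var (Sum.inr s)) =
            Term.realize (Sum.elim v x) (Term.var (Sum.inr t)) ↔
            Term.realize (Sum.elim w y) (Term.var (Sum.inr s)) =
            Term.realize (Sum.elim w y) (Term.var (Sum.inr t))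
        simp only [Term.realize_var, Sum.elim_inr]
        exact hEq d x y hP s t
  | rel R ts =>
    intro d hd x y hP v w
    cases R
    obtain ⟨i₀, h₀⟩ := graph_term_eq (ts 0)
    obtain ⟨i₁, h₁⟩ := graph_term_eq (ts 1)
    letI := G.structure; letI := H.structure
    show G.Adj (Term.realize (Sum.elim v x) (ts 0)) (Term.realize (Sum.elim v x) (ts 1)) ↔
        H.Adj (Term.realize (Sum.elim w y) (ts 0)) (Term.realize (Sum.elim w y) (ts 1))
    rw [h₀, h₁]
    cases i₀ with
    | inl e => exact e.elim
    | inr s =>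
      cases i₁ with
      | inl e => exact e.elim
      | inr t =>
        simp only [Term.realize_var, Sum.elim_inr]
        exact hAdj d x y hP s t
  | imp f g ihf ihg =>
    intro d hd x y hP v w
    simp only [BoundedFormula.qdepth, max_le_iff] at hd
    letI := G.structure; letI := H.structure
    simp only [BoundedFormula.realize_imp]
    exact imp_congr (ihf d hd.1 x y hP v w) (ihg d hd.2 x y hP v w)
  | all f ih =>
    intro d hd x y hP v w
    simp only [BoundedFormula.qdepth] at hd
    obtain ⟨d', rfl⟩ : ∃ d', d = d' + 1 := ⟨d - 1, by omega⟩
    have hd' : f.qdepth ≤ d' := by omega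
    letI := G.structure; letI := H.structure
    simp only [BoundedFormula.realize_all]
    constructor
    · intro h b
      obtain ⟨a, hP'⟩ := hBack d' x y hP b
      exact (ih d' hd' _ _ hP' v w).mp (h a)
    · intro h a
      obtain ⟨b, hP'⟩ := hForth d' x y hP a
      exact (ih d' hd' _ _ hP' v w).mpr (h b)

/-- Given a pattern-preserving pair of tuples and a new element `a`, one can choose a
matching element `b` on the other side, provided there is room for a fresh value. -/
lemma exists_match {A B : Type*} [Fintype A] [Fintype B] {n : ℕ}
    (u : Fin n → A) (v : Fin n → B)
    (hpat : ∀ s t, u s = u t ↔ v s = v t)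
    (hcard : n < Fintype.card B ∨ Fintype.card A ≤ Fintype.card B)
    (a : A) : ∃ b : B, ∀ t, (a = u t ↔ b = v t) := by
  classical
  by_cases h : ∃ t, u t = a
  · obtain ⟨t₀, ht₀⟩ := h
    refine ⟨v t₀, fun t => ?_⟩
    rw [← ht₀, hpat t₀ t]
  · push_neg at h
    have hcardv : (Finset.univ.image v).card < Fintype.card B := by
      rcases hcard with hc | hc
      · exact lt_of_le_of_lt (le_trans Finset.card_image_le (by simp)) hc
      · have key : (Finset.univ.image u).card = (Finset.univ.image v).card := by
          apply Finset.card_bij (fun a ha => v (Finset.mem_image.mp ha).choose)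
          · intro a ha
            exact Finset.mem_image.mpr ⟨_, Finset.mem_univ _, rfl⟩
          · intro a₁ ha₁ a₂ ha₂ heq
            have h₁ := (Finset.mem_image.mp ha₁).choose_spec.2
            have h₂ := (Finset.mem_image.mp ha₂).choose_spec.2
            rw [← h₁, ← h₂]
            exact (hpat _ _).mpr heq
          · intro b hb
            obtain ⟨t, _, rfl⟩ := Finset.mem_image.mp hb
            refine ⟨u t, Finset.mem_image.mpr ⟨t, Finset.mem_univ _, rfl⟩, ?_⟩
            have h₁ := (Finset.mem_image.mp
              (Finset.mem_image.mpr ⟨t, Finset.mem_univ t, rfl⟩ :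
                u t ∈ Finset.univ.image u)).choose_spec.2
            exact (hpat _ _).mp h₁
        have hssub : (Finset.univ.image u).card < Fintype.card A := by
          rw [← Finset.card_univ]
          apply Finset.card_lt_card
          refine Finset.ssubset_iff_of_subset (Finset.subset_univ _) |>.mpr ?_
          exact ⟨a, Finset.mem_univ a, fun ha => by
            obtain ⟨t, _, ht⟩ := Finset.mem_image.mp ha; exact h t ht⟩
        omega
    have hex : ∃ b, b ∉ Finset.univ.image v := by
      by_contra hall
      push_neg at hall
      have hsub : Finset.univ ⊆ Finset.univ.image v := fun b _ => hall b
      have := Finset.card_le_card hsub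
      rw [Finset.card_univ] at this
      omega
    obtain ⟨b, hb⟩ := hex
    refine ⟨b, fun t => ?_⟩
    constructor
    · intro hat; exact absurd hat.symm (h t)
    · intro hbt
      exact absurd (Finset.mem_image.mpr ⟨t, Finset.mem_univ t, hbt.symm⟩) hb

/-- The EF-game invariant between almost multipartite graphs: a move budget together with
matching coordinate-equality patterns. -/
def Pinv (L₁ L₂ k m D : ℕ) (d : ℕ) {n : ℕ}
    (x : Fin n → Fin L₁ × Fin k × Fin m) (y : Fin n → Fin L₂ × Fin k × Fin m) : Prop :=
  n + d ≤ D ∧ ∀ s t, ((x s).1 = (x t).1 ↔ (y s).1 = (y t).1) ∧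
    ((x s).2.1 = (x t).2.1 ↔ (y s).2.1 = (y t).2.1) ∧
    ((x s).2.2 = (x t).2.2 ↔ (y s).2.2 = (y t).2.2)

lemma pinv_swap {L₁ L₂ k m D d n : ℕ} {x : Fin n → Fin L₁ × Fin k × Fin m}
    {y : Fin n → Fin L₂ × Fin k × Fin m} (h : Pinv L₁ L₂ k m D d x y) :
    Pinv L₂ L₁ k m D d y x :=
  ⟨h.1, fun s t => ⟨(h.2 s t).1.symm, (h.2 s t).2.1.symm, (h.2 s t).2.2.symm⟩⟩

lemma pinv_forth {L₁ L₂ k m D : ℕ} (hL2 : D ≤ L₂) (d : ℕ) {n : ℕ}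
    (x : Fin n → Fin L₁ × Fin k × Fin m) (y : Fin n → Fin L₂ × Fin k × Fin m)
    (hP : Pinv L₁ L₂ k m D (d+1) x y) (a : Fin L₁ × Fin k × Fin m) :
    ∃ b, Pinv L₁ L₂ k m D d (Fin.snoc x a) (Fin.snoc y b) := by
  obtain ⟨hn, hpat⟩ := hP
  obtain ⟨i', hi'⟩ := exists_match (fun t => (x t).1) (fun t => (y t).1)
    (fun s t => (hpat s t).1) (Or.inl (by simp; omega)) a.1
  obtain ⟨j', hj'⟩ := exists_match (fun t => (x t).2.1) (fun t => (y t).2.1)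
    (fun s t => (hpat s t).2.1) (Or.inr le_rfl) a.2.1
  obtain ⟨h', hh'⟩ := exists_match (fun t => (x t).2.2) (fun t => (y t).2.2)
    (fun s t => (hpat s t).2.2) (Or.inr le_rfl) a.2.2
  refine ⟨(i', j', h'), ⟨by omega, fun s t => ?_⟩⟩
  induction s using Fin.lastCases with
  | last =>
    induction t using Fin.lastCases with
    | last => simp
    | cast t' =>
      simp only [Fin.snoc_last, Fin.snoc_castSucc]
      exact ⟨hi' t', hj' t', hh' t'⟩
  | cast s' =>
    induction t using Fin.lastCases with
    | last =>
      simp only [Fin.snoc_last, Fin.snoc_castSucc]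
      exact ⟨eq_comm.trans ((hi' s').trans eq_comm),
        eq_comm.trans ((hj' s').trans eq_comm),
        eq_comm.trans ((hh' s').trans eq_comm)⟩
    | cast t' =>
      simp only [Fin.snoc_castSucc]
      exact hpat s' t'

end EFAux

open FirstOrder in
/-- for `ℓ ≥ 2`, the almost multipartite graphs `G^m_{ℓ,k}` and
`G^m_{ℓ−1,k}` satisfy exactly the same first-order sentences of quantifier depth
at most `ℓ − 1`. -/
theorem almostMultipartite_elementary_equiv (ℓ k m : ℕ) (hℓ : 2 ≤ ℓ) (hm : 1 ≤ m)
    (hk : 1 ≤ k) (φ : Language.graph.Sentence) (hφ : φ.qdepth ≤ ℓ - 1) :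
    (letI := (almostMultipartite ℓ k m).structure
     φ.Realize (Fin ℓ × Fin k × Fin m)) ↔
    (letI := (almostMultipartite (ℓ - 1) k m).structure
     φ.Realize (Fin (ℓ - 1) × Fin k × Fin m)) := by
  have hEq : ∀ (d : ℕ) {n : ℕ} (x : Fin n → Fin ℓ × Fin k × Fin m)
      (y : Fin n → Fin (ℓ - 1) × Fin k × Fin m), Pinv ℓ (ℓ - 1) k m (ℓ - 1) d x y →
      ∀ s t, (x s = x t ↔ y s = y t) := by
    intro d n x y hP s t
    have h := hP.2 s t
    rw [Prod.ext_iff, Prod.ext_iff, Prod.ext_iff, Prod.ext_iff, h.1, h.2.1, h.2.2]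
  have hAdj : ∀ (d : ℕ) {n : ℕ} (x : Fin n → Fin ℓ × Fin k × Fin m)
      (y : Fin n → Fin (ℓ - 1) × Fin k × Fin m), Pinv ℓ (ℓ - 1) k m (ℓ - 1) d x y →
      ∀ s t, ((almostMultipartite ℓ k m).Adj (x s) (x t) ↔
        (almostMultipartite (ℓ - 1) k m).Adj (y s) (y t)) := by
    intro d n x y hP s t
    have h := hP.2 s t
    show ((x s).2.2 = (x t).2.2 ∧ (x s).1 ≠ (x t).1 ∧ (x s).2.1 ≠ (x t).2.1) ∨
        ((x s).1 = (x t).1 ∧ (x s).2.2 ≠ (x t).2.2) ↔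
        ((y s).2.2 = (y t).2.2 ∧ (y s).1 ≠ (y t).1 ∧ (y s).2.1 ≠ (y t).2.1) ∨
        ((y s).1 = (y t).1 ∧ (y s).2.2 ≠ (y t).2.2)
    simp only [ne_eq, h.1, h.2.1, h.2.2]
  have hForth : ∀ (d : ℕ) {n : ℕ} (x : Fin n → Fin ℓ × Fin k × Fin m)
      (y : Fin n → Fin (ℓ - 1) × Fin k × Fin m), Pinv ℓ (ℓ - 1) k m (ℓ - 1) (d+1) x y →
      ∀ a, ∃ b, Pinv ℓ (ℓ - 1) k m (ℓ - 1) d (Fin.snoc x a) (Fin.snoc y b) := by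
    intro d n x y hP a
    exact pinv_forth le_rfl d x y hP a
  have hBack : ∀ (d : ℕ) {n : ℕ} (x : Fin n → Fin ℓ × Fin k × Fin m)
      (y : Fin n → Fin (ℓ - 1) × Fin k × Fin m), Pinv ℓ (ℓ - 1) k m (ℓ - 1) (d+1) x y →
      ∀ b, ∃ a, Pinv ℓ (ℓ - 1) k m (ℓ - 1) d (Fin.snoc x a) (Fin.snoc y b) := by
    intro d n x y hP b
    obtain ⟨a, ha⟩ := pinv_forth (by omega) d y x (pinv_swap hP) b
    exact ⟨a, pinv_swap ha⟩
  have hP0 : Pinv ℓ (ℓ - 1) k m (ℓ - 1) (ℓ - 1) (default : Fin 0 → _)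
      (default : Fin 0 → _) := ⟨by omega, fun s t => s.elim0⟩
  exact ef_transfer (almostMultipartite ℓ k m) (almostMultipartite (ℓ - 1) k m)
    (Pinv ℓ (ℓ - 1) k m (ℓ - 1)) hEq hAdj hForth hBack φ (ℓ - 1) hφ
    default default hP0 default default
end

section
/- Let G_{3,1,1} be the 5-vertex graph consisting of a triangle x_1x_2x_3 together with two pendant edges x_1x_4 and x_2x_5 attached at two distinct triangle vertices. Let G_0 be the 8-vertex graph on {a_1,…,a_4,b_1,…,b_4} in which a_1,…,a_4 induce a complete graph K_4, b_1,…,b_4 induce the 4-cycle b_1b_2b_3b_4, and additionally a_i is adjacent to b_i for each i; let H_0 be the triangular prism (two triangles a_1a_2a_3 and b_1b_2b_3 together with the matching edges a_ib_i). Let G* be the graph obtained from the disjoint union of two copies of G_0 by adding one new vertex adjacent to all other vertices, and H* be the graph obtained from the disjoint union of two copies of H_0 by adding one new vertex adjacent to all other vertices. Then G* contains an induced subgraph isomorphic to G_{3,1,1}, while H* does not contain an induced subgraph isomorphic to G_{3,1,1}. -/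
/-- Add an apex vertex (`none`) adjacent to all vertices of `G`. -/
def addApex {α : Type*} (G : SimpleGraph α) : SimpleGraph (Option α) where
  Adj u v := match u, v with
    | none, none => False
    | none, some _ => True
    | some _, none => True
    | some a, some b => G.Adj a b
  symm := by
    constructor
    rintro (_ | a) (_ | b) h
    · exact h
    · exact trivial
    · exact trivial
    · exact G.adj_symm h
  loopless := by
    constructor
    rintro (_ | a) h
    · exact h
    · exact G.loopless.irrefl a h

/-- `G₀`: 8-vertex graph in which the `inl` vertices `a₁,…,a₄` induce a complete graph
`K₄`, the `inr` vertices `b₁,…,b₄` induce the 4-cycle `b₁b₂b₃b₄`, and `aᵢ ~ bᵢ`. -/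
def G₀ : SimpleGraph (Fin 4 ⊕ Fin 4) where
  Adj u v := match u, v with
    | .inl a, .inl b => a ≠ b
    | .inl a, .inr b => a = b
    | .inr a, .inl b => a = b
    | .inr a, .inr b => (SimpleGraph.cycleGraph 4).Adj a b
  symm := by
    constructor
    rintro (a | a) (b | b) h
    · exact h.symm
    · exact h.symm
    · exact h.symm
    · exact (SimpleGraph.cycleGraph 4).adj_symm h
  loopless := by
    constructor
    rintro (a | a) h
    · exact h rfl
    · exact (SimpleGraph.cycleGraph 4).loopless.irrefl a h

/-- `H₀`: the triangular prism, two triangles `a₁a₂a₃` (the `inl` vertices) and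
`b₁b₂b₃` (the `inr` vertices) together with the matching edges `aᵢbᵢ`. -/
def H₀ : SimpleGraph (Fin 3 ⊕ Fin 3) where
  Adj u v := match u, v with
    | .inl a, .inl b => a ≠ b
    | .inl a, .inr b => a = b
    | .inr a, .inl b => a = b
    | .inr a, .inr b => a ≠ b
  symm := by constructor; rintro (a | a) (b | b) h <;> exact h.symm
  loopless := by constructor; rintro (a | a) h <;> exact h rfl

/-- `G*`: the disjoint union of two copies of `G₀` with an added apex vertex
adjacent to everything. -/
def Gstar : SimpleGraph (Option ((Fin 4 ⊕ Fin 4) ⊕ (Fin 4 ⊕ Fin 4))) :=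
  addApex (G₀ ⊕g G₀)

/-- `H*`: the disjoint union of two copies of `H₀` with an added apex vertex
adjacent to everything. -/
def Hstar : SimpleGraph (Option ((Fin 3 ⊕ Fin 3) ⊕ (Fin 3 ⊕ Fin 3))) :=
  addApex (H₀ ⊕g H₀)

/-- `G_{3,1,1}`: the 5-vertex graph consisting of the triangle `0-1-2` together with the
pendant edges `0-3` and `1-4`. -/
def G311 : SimpleGraph (Fin 5) :=
  SimpleGraph.fromRel fun a b =>
    (a = 0 ∧ b = 1) ∨ (a = 1 ∧ b = 2) ∨ (a = 0 ∧ b = 2) ∨ (a = 0 ∧ b = 3) ∨ (a = 1 ∧ b = 4)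

/- ### Auxiliary decidability instances -/

instance : DecidableRel G₀.Adj := by
  rintro (a|a) (b|b) <;> unfold G₀ <;> dsimp <;> infer_instance

instance : DecidableRel H₀.Adj := by
  rintro (a|a) (b|b) <;> unfold H₀ <;> dsimp <;> infer_instance

instance instDecApex {α : Type*} (G : SimpleGraph α) [DecidableRel G.Adj] :
    DecidableRel (addApex G).Adj := by
  rintro (_|a) (_|b) <;> unfold addApex <;> dsimp <;> infer_instance

instance instDecSum {α β : Type*} (G : SimpleGraph α) (H : SimpleGraph β) [DecidableRel G.Adj]
    [DecidableRel H.Adj] : DecidableRel (G ⊕g H).Adj := fun u v =>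
  match u, v with
  | Sum.inl a, Sum.inl b => inferInstanceAs (Decidable (G.Adj a b))
  | Sum.inr a, Sum.inr b => inferInstanceAs (Decidable (H.Adj a b))
  | Sum.inl _, Sum.inr _ => isFalse (by simp)
  | Sum.inr _, Sum.inl _ => isFalse (by simp)

instance : DecidableRel Gstar.Adj := by unfold Gstar; infer_instance
instance : DecidableRel Hstar.Adj := by unfold Hstar; infer_instance
instance : DecidableRel G311.Adj := fun a b =>
  decidable_of_iff _ (SimpleGraph.fromRel_adj _ a b).symm

/- ### The positive part: an explicit embedding -/

def gmap : Fin 5 → Option ((Fin 4 ⊕ Fin 4) ⊕ (Fin 4 ⊕ Fin 4))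
  | 0 => some (.inl (.inl 0))
  | 1 => some (.inl (.inl 2))
  | 2 => some (.inl (.inl 1))
  | 3 => some (.inl (.inr 0))
  | 4 => some (.inl (.inr 2))

/- ### The negative part: auxiliary lemmas -/

/-- The triangular prism contains no induced `G_{3,1,1}` (exhaustive check). -/
lemma prism_no_G311 : ∀ v0 v1 v2 v3 v4 : Fin 3 ⊕ Fin 3,
    ¬(H₀.Adj v0 v1 ∧ H₀.Adj v1 v2 ∧ H₀.Adj v0 v2 ∧ H₀.Adj v0 v3 ∧ H₀.Adj v1 v4 ∧
      ¬H₀.Adj v2 v3 ∧ ¬H₀.Adj v2 v4 ∧ ¬H₀.Adj v3 v4 ∧ ¬H₀.Adj v0 v4 ∧ ¬H₀.Adj v1 v3) := by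
  decide

/-- Adjacent vertices of a disjoint sum lie on the same side. -/
lemma sum_adj_same_side {α β : Type*} {G : SimpleGraph α} {H : SimpleGraph β}
    {x y : α ⊕ β} (h : (G ⊕g H).Adj x y) : x.isLeft = y.isLeft := by
  rcases x with x | x <;> rcases y with y | y <;> simp_all [SimpleGraph.sum_adj]

/-- `G*` contains an induced subgraph isomorphic to `G_{3,1,1}`,
while `H*` does not. -/
theorem apex_graphs_induced_G311 :
    Nonempty (G311 ↪g Gstar) ∧ ¬Nonempty (G311 ↪g Hstar) := by
  constructor
  · exact ⟨⟨⟨gmap, by decide⟩, by decide⟩⟩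
  · rintro ⟨f⟩
    -- the apex is not in the image of `f`
    have h5 : ∀ i : Fin 5, ∃ j, j ≠ i ∧ ¬ G311.Adj i j := by decide
    have hsome : ∀ i, ∃ x, f i = some x := by
      intro i
      cases hi : f i with
      | some x => exact ⟨x, rfl⟩
      | none =>
        obtain ⟨j, hji, hnadj⟩ := h5 i
        exfalso
        cases hj : f j with
        | none => exact hji (f.injective (hj.trans hi.symm))
        | some y =>
          refine hnadj (f.map_adj_iff.mp ?_)
          rw [hi, hj]
          exact trivial
    choose g hg using hsome
    have hadj : ∀ a b, (H₀ ⊕g H₀).Adj (g a) (g b) ↔ G311.Adj a b := by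
      intro a b
      rw [show (H₀ ⊕g H₀).Adj (g a) (g b) ↔ Hstar.Adj (some (g a)) (some (g b)) from Iff.rfl,
        ← hg a, ← hg b]
      exact f.map_adj_iff
    -- all five images lie on the same side of the disjoint sum
    have hside : ∀ i : Fin 5, (g i).isLeft = (g 0).isLeft := by
      have e01 : (g 0).isLeft = (g 1).isLeft :=
        sum_adj_same_side ((hadj 0 1).mpr (by decide))
      have e02 : (g 0).isLeft = (g 2).isLeft :=
        sum_adj_same_side ((hadj 0 2).mpr (by decide))
      have e03 : (g 0).isLeft = (g 3).isLeft :=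
        sum_adj_same_side ((hadj 0 3).mpr (by decide))
      have e14 : (g 1).isLeft = (g 4).isLeft :=
        sum_adj_same_side ((hadj 1 4).mpr (by decide))
      intro i
      fin_cases i <;> simp [← e01, ← e02, ← e03, ← e14]
    -- extract the five vertices into a single copy of the prism
    have key : ∀ p : Fin 5 → Fin 3 ⊕ Fin 3,
        (∀ a b, H₀.Adj (p a) (p b) ↔ G311.Adj a b) → False := by
      intro p hp
      exact prism_no_G311 (p 0) (p 1) (p 2) (p 3) (p 4)
        ⟨(hp 0 1).mpr (by decide), (hp 1 2).mpr (by decide), (hp 0 2).mpr (by decide),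
         (hp 0 3).mpr (by decide), (hp 1 4).mpr (by decide),
         fun h => (by decide : ¬ G311.Adj 2 3) ((hp 2 3).mp h),
         fun h => (by decide : ¬ G311.Adj 2 4) ((hp 2 4).mp h),
         fun h => (by decide : ¬ G311.Adj 3 4) ((hp 3 4).mp h),
         fun h => (by decide : ¬ G311.Adj 0 4) ((hp 0 4).mp h),
         fun h => (by decide : ¬ G311.Adj 1 3) ((hp 1 3).mp h)⟩
    cases hg0 : g 0 with
    | inl s0 =>
      have hl : ∀ i, ∃ t, g i = Sum.inl t := by
        intro i
        have := hside i
        rw [hg0] at this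
        cases hgi : g i with
        | inl t => exact ⟨t, rfl⟩
        | inr t => rw [hgi] at this; simp at this
      choose p hp using hl
      refine key p fun a b => ?_
      rw [← hadj a b, hp a, hp b]
      exact Iff.rfl
    | inr s0 =>
      have hr : ∀ i, ∃ t, g i = Sum.inr t := by
        intro i
        have := hside i
        rw [hg0] at this
        cases hgi : g i with
        | inr t => exact ⟨t, rfl⟩
        | inl t => rw [hgi] at this; simp at this
      choose p hp using hr
      refine key p fun a b => ?_
      rw [← hadj a b, hp a, hp b]
      exact Iff.rfl
end
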